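/- arXiv:2103.16071 — 4 statements merged into one kernel-verified Lean document; each statement's English description precedes it below -/
import Mathlib

section
/- Let 0 < ε ≤ 1 and 0 < λ ≤ ε/3, let x ∈ ℝᵈ, and let s_x ∈ S be a segment achieving the minimum of dist(x, s) over s ∈ S. Then for every z ∈ C^λ(x, φ(x)), dist(z, s_x) ≤ (1 + ε)·min_{s ∈ S} dist(z, s); that is, the nearest segment of x is a (1+ε)-approximate nearest neighbor of z. -/
noncomputable section

open Metric Set MeasureTheory
open scoped InnerProductSpace Classical

variable {d n : ℕ}

/-- The capsule `C_s(x,r)` induced by a single segment `s = [a,b]` with unit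
direction vector `v`.  If the nearest point of `s` to `x` is an endpoint, it is
the closed ball of radius `max r (dist x s)`; otherwise it is the intersection
of the infinite closed cylinder of radius `max r (dist x s)` whose axis is the
line through `x` parallel to `v` with the closed ball of radius
`max r (min ‖x-a‖ ‖x-b‖)`. -/
def capsuleSeg (a b v x : EuclideanSpace ℝ (Fin d)) (r : ℝ) :
    Set (EuclideanSpace ℝ (Fin d)) :=
  if Metric.infDist x (segment ℝ a b) = min (dist x a) (dist x b) then
    Metric.closedBall x (max r (Metric.infDist x (segment ℝ a b)))
  else
    {y | ‖(y - x) - ⟪y - x, v⟫_ℝ • v‖ ≤ max r (Metric.infDist x (segment ℝ a b))} ∩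
      Metric.closedBall x (max r (min (dist x a) (dist x b)))

/-- The capsule `C(x,r)` of the family of segments `s i = [a i, b i]`. -/
def capsuleFam (a b v : Fin n → EuclideanSpace ℝ (Fin d))
    (x : EuclideanSpace ℝ (Fin d)) (r : ℝ) : Set (EuclideanSpace ℝ (Fin d)) :=
  ⋂ i, capsuleSeg (a i) (b i) (v i) x r

/-- Image of a set under the homothety (central scaling) centered at `x` with ratio `lam`. -/
def scaleAbout (x : EuclideanSpace ℝ (Fin d)) (lam : ℝ)
    (C : Set (EuclideanSpace ℝ (Fin d))) : Set (EuclideanSpace ℝ (Fin d)) :=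
  (AffineMap.homothety x lam) '' C

/-- Local feature size: the distance from `x` to its second-nearest segment. -/
def lfs (a b : Fin n → EuclideanSpace ℝ (Fin d)) (x : EuclideanSpace ℝ (Fin d)) : ℝ :=
  sInf {t | ∃ i j : Fin n, i < j ∧
    t = max (Metric.infDist x (segment ℝ (a i) (b i)))
            (Metric.infDist x (segment ℝ (a j) (b j)))}

/-- `D_i(x)`: half the squared distance from `x` to the segment `[a,b]`. -/
def Dseg (a b x : EuclideanSpace ℝ (Fin d)) : ℝ :=
  Metric.infDist x (segment ℝ a b) ^ 2 / 2

/-- `D•_i(x)`: half the squared distance from `x` to the nearest endpoint. -/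
def Dbullet (a b x : EuclideanSpace ℝ (Fin d)) : ℝ :=
  min (dist x a ^ 2) (dist x b ^ 2) / 2

/-- The quadratic form `w ↦ wᵀ H_i(x) w` of the local tensor
`H_i(x) = (1/D_i(x))(I - v vᵀ) + (1/D•_i(x)) v vᵀ`. -/
def tensorQ (a b v x w : EuclideanSpace ℝ (Fin d)) : ℝ :=
  (1 / Dseg a b x) * (‖w‖ ^ 2 - ⟪w, v⟫_ℝ ^ 2) + (1 / Dbullet a b x) * ⟪w, v⟫_ℝ ^ 2

/-- The local ellipsoid `E_i(x) = {y | ½ (y-x)ᵀ H_i(x) (y-x) ≤ 1}`. -/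
def localEllipsoid (a b v x : EuclideanSpace ℝ (Fin d)) :
    Set (EuclideanSpace ℝ (Fin d)) :=
  {y | tensorQ a b v x (y - x) / 2 ≤ 1}

/-- `Ê(x)`: the intersection of the local ellipsoids of all segments. -/
def hatE (a b v : Fin n → EuclideanSpace ℝ (Fin d)) (x : EuclideanSpace ℝ (Fin d)) :
    Set (EuclideanSpace ℝ (Fin d)) :=
  ⋂ i, localEllipsoid (a i) (b i) (v i) x

/-- `Ẽ(x)`: the ellipsoid of the blended tensor `H(x) = ∑ i, H_i(x)`. -/
def tildeE (a b v : Fin n → EuclideanSpace ℝ (Fin d)) (x : EuclideanSpace ℝ (Fin d)) :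
    Set (EuclideanSpace ℝ (Fin d)) :=
  {y | (∑ i, tensorQ (a i) (b i) (v i) x (y - x)) / 2 ≤ 1}


section Helpers
variable {d : ℕ}

lemma perp_inner_aux (v u : EuclideanSpace ℝ (Fin d)) (hv : ‖v‖ = 1) :
    ⟪u - ⟪u, v⟫_ℝ • v, v⟫_ℝ = 0 := by
  rw [inner_sub_left, real_inner_smul_left, real_inner_self_eq_norm_sq, hv]
  ring

lemma norm_sq_decomp (v u : EuclideanSpace ℝ (Fin d)) (hv : ‖v‖ = 1) :
    ‖u‖ ^ 2 = ‖u - ⟪u, v⟫_ℝ • v‖ ^ 2 + ⟪u, v⟫_ℝ ^ 2 := by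
  have h0 : ⟪u - ⟪u, v⟫_ℝ • v, ⟪u, v⟫_ℝ • v⟫_ℝ = 0 := by
    rw [real_inner_smul_right, perp_inner_aux v u hv]; ring
  have hu : u = (u - ⟪u, v⟫_ℝ • v) + ⟪u, v⟫_ℝ • v := by abel
  calc ‖u‖ ^ 2 = ‖(u - ⟪u, v⟫_ℝ • v) + ⟪u, v⟫_ℝ • v‖ ^ 2 := by rw [← hu]
    _ = ‖u - ⟪u, v⟫_ℝ • v‖ ^ 2 + 2 * ⟪u - ⟪u, v⟫_ℝ • v, ⟪u, v⟫_ℝ • v⟫_ℝ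
          + ‖⟪u, v⟫_ℝ • v‖ ^ 2 := norm_add_sq_real _ _
    _ = ‖u - ⟪u, v⟫_ℝ • v‖ ^ 2 + ⟪u, v⟫_ℝ ^ 2 := by
          rw [h0, norm_smul, hv, mul_one, Real.norm_eq_abs, sq_abs]
          ring

lemma dist_sq_line (a v u : EuclideanSpace ℝ (Fin d)) (hv : ‖v‖ = 1) (t : ℝ) :
    ‖u - (a + t • v)‖ ^ 2
      = ‖(u - a) - ⟪u - a, v⟫_ℝ • v‖ ^ 2 + (⟪u - a, v⟫_ℝ - t) ^ 2 := by
  have hw : u - (a + t • v) = (u - a) - t • v := by abel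
  have h1 : ⟪u - (a + t • v), v⟫_ℝ = ⟪u - a, v⟫_ℝ - t := by
    rw [hw, inner_sub_left, real_inner_smul_left, real_inner_self_eq_norm_sq, hv]; ring
  have h2 : (u - (a + t • v)) - ⟪u - (a + t • v), v⟫_ℝ • v
      = (u - a) - ⟪u - a, v⟫_ℝ • v := by
    rw [h1, hw]; module
  have key := norm_sq_decomp v (u - (a + t • v)) hv
  rw [h2, h1] at key
  exact key

lemma seg_mem_char {a b : EuclideanSpace ℝ (Fin d)} (v : EuclideanSpace ℝ (Fin d))
    (hdir : b - a = ‖b - a‖ • v) :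
    ∀ p ∈ segment ℝ a b, ∃ t, 0 ≤ t ∧ t ≤ ‖b - a‖ ∧ p = a + t • v := by
  intro p hp
  rw [segment_eq_image'] at hp
  obtain ⟨θ, hθ, rfl⟩ := hp
  refine ⟨θ * ‖b - a‖, mul_nonneg hθ.1 (norm_nonneg _), ?_, ?_⟩
  · nlinarith [hθ.2, norm_nonneg (b - a)]
  · show a + θ • (b - a) = _
    set L := ‖b - a‖ with hL
    rw [hdir, smul_smul]

lemma seg_mem_of {a b : EuclideanSpace ℝ (Fin d)} (v : EuclideanSpace ℝ (Fin d))
    (hab : a ≠ b) (hdir : b - a = ‖b - a‖ • v) {t : ℝ}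
    (h0 : 0 ≤ t) (hL : t ≤ ‖b - a‖) : a + t • v ∈ segment ℝ a b := by
  have hL0 : (0:ℝ) < ‖b - a‖ := by
    rw [norm_pos_iff, sub_ne_zero]; exact fun h => hab h.symm
  rw [segment_eq_image']
  refine ⟨t / ‖b - a‖, ⟨by positivity, by rw [div_le_one hL0]; exact hL⟩, ?_⟩
  show a + (t / ‖b - a‖) • (b - a) = a + t • v
  set L := ‖b - a‖ with hLd
  rw [hdir, smul_smul, div_mul_cancel₀ _ (ne_of_gt hL0)]

lemma infDist_ge_perp {a b : EuclideanSpace ℝ (Fin d)} (v u : EuclideanSpace ℝ (Fin d))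
    (hv : ‖v‖ = 1) (hdir : b - a = ‖b - a‖ • v) :
    ‖(u - a) - ⟪u - a, v⟫_ℝ • v‖ ≤ Metric.infDist u (segment ℝ a b) := by
  by_contra h
  push_neg at h
  rw [Metric.infDist_lt_iff ⟨a, left_mem_segment ℝ a b⟩] at h
  obtain ⟨p, hp, hlt⟩ := h
  obtain ⟨t, _, _, rfl⟩ := seg_mem_char v hdir p hp
  rw [dist_eq_norm] at hlt
  have hsq := dist_sq_line a v u hv t
  nlinarith [norm_nonneg ((u - a) - ⟪u - a, v⟫_ℝ • v), norm_nonneg (u - (a + t • v)),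
    sq_nonneg (⟪u - a, v⟫_ℝ - t)]

lemma infDist_le_min_endpoints (a b u : EuclideanSpace ℝ (Fin d)) :
    Metric.infDist u (segment ℝ a b) ≤ min (dist u a) (dist u b) :=
  le_min (Metric.infDist_le_dist_of_mem (left_mem_segment ℝ a b))
    (Metric.infDist_le_dist_of_mem (right_mem_segment ℝ a b))

lemma else_struct {a b : EuclideanSpace ℝ (Fin d)} (v x : EuclideanSpace ℝ (Fin d))
    (hab : a ≠ b) (hv : ‖v‖ = 1) (hdir : b - a = ‖b - a‖ • v)
    (hne : Metric.infDist x (segment ℝ a b) ≠ min (dist x a) (dist x b)) :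
    0 ≤ ⟪x - a, v⟫_ℝ ∧ ⟪x - a, v⟫_ℝ ≤ ‖b - a‖ ∧
      Metric.infDist x (segment ℝ a b) = ‖(x - a) - ⟪x - a, v⟫_ℝ • v‖ := by
  have hlt : Metric.infDist x (segment ℝ a b) < min (dist x a) (dist x b) :=
    lt_of_le_of_ne (infDist_le_min_endpoints a b x) hne
  set L := ‖b - a‖ with hLdef
  set ts := ⟪x - a, v⟫_ℝ with htsdef
  have hb : b = a + L • v := by
    have h : a + (b - a) = b := by abel
    rw [← h, hdir]
  have hxa : ‖x - a‖ ^ 2 = ‖(x - a) - ts • v‖ ^ 2 + ts ^ 2 := norm_sq_decomp v (x - a) hv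
  have hxb : ‖x - b‖ ^ 2 = ‖(x - a) - ts • v‖ ^ 2 + (ts - L) ^ 2 := by
    have := dist_sq_line a v x hv L
    rw [← hb] at this
    exact this
  have hts0 : 0 ≤ ts := by
    by_contra hts
    push_neg at hts
    have hge : dist x a ≤ Metric.infDist x (segment ℝ a b) := by
      by_contra hcon
      push_neg at hcon
      rw [Metric.infDist_lt_iff ⟨a, left_mem_segment ℝ a b⟩] at hcon
      obtain ⟨p, hp, hplt⟩ := hcon
      obtain ⟨t, ht0, _, rfl⟩ := seg_mem_char v hdir p hp
      rw [dist_eq_norm, dist_eq_norm] at hplt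
      have hsq := dist_sq_line a v x hv t
      nlinarith [norm_nonneg (x - (a + t • v)), norm_nonneg (x - a)]
    have : min (dist x a) (dist x b) ≤ dist x a := min_le_left _ _
    linarith
  have htsL : ts ≤ L := by
    by_contra hts
    push_neg at hts
    have hge : dist x b ≤ Metric.infDist x (segment ℝ a b) := by
      by_contra hcon
      push_neg at hcon
      rw [Metric.infDist_lt_iff ⟨a, left_mem_segment ℝ a b⟩] at hcon
      obtain ⟨p, hp, hplt⟩ := hcon
      obtain ⟨t, _, htL, rfl⟩ := seg_mem_char v hdir p hp
      rw [dist_eq_norm, dist_eq_norm] at hplt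
      have hsq := dist_sq_line a v x hv t
      nlinarith [norm_nonneg (x - (a + t • v)), norm_nonneg (x - b)]
    have : min (dist x a) (dist x b) ≤ dist x b := min_le_right _ _
    linarith
  refine ⟨hts0, htsL, le_antisymm ?_ (infDist_ge_perp v x hv hdir)⟩
  have hmem : a + ts • v ∈ segment ℝ a b := seg_mem_of v hab hdir hts0 htsL
  have h1 : Metric.infDist x (segment ℝ a b) ≤ dist x (a + ts • v) :=
    Metric.infDist_le_dist_of_mem hmem
  have h2 : dist x (a + ts • v) = ‖(x - a) - ts • v‖ := by
    rw [dist_eq_norm]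
    have hsq := dist_sq_line a v x hv ts
    have : ‖x - (a + ts • v)‖ ^ 2 = ‖(x - a) - ts • v‖ ^ 2 := by rw [hsq]; ring
    nlinarith [norm_nonneg (x - (a + ts • v)), norm_nonneg ((x - a) - ts • v)]
  rw [h2] at h1
  exact h1

set_option maxHeartbeats 1600000 in
lemma arith_key (lam phi delta pp tau C m Eb P ov : ℝ)
    (hlam0 : 0 < lam) (hlam1 : lam ≤ 1)
    (hd0 : 0 ≤ delta) (hdphi : delta ≤ phi) (hpp0 : 0 ≤ pp) (hppphi : pp ≤ phi)
    (hC : 0 ≤ C) (hm0 : 0 ≤ m) (hm2 : m ^ 2 = pp ^ 2 + tau ^ 2)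
    (hE : Eb ^ 2 = delta ^ 2 + C ^ 2) (hEb0 : 0 ≤ Eb)
    (hmle : m ≤ phi ∨ m ≤ Eb)
    (hP0 : 0 ≤ P) (hP : P ≤ delta + lam * pp)
    (hov : ov = lam * tau - C) (hov0 : 0 ≤ ov) :
    P ^ 2 + ov ^ 2 ≤ ((1 + lam) * phi) ^ 2 := by
  subst hov
  have hphi0 : 0 ≤ phi := le_trans hd0 hdphi
  have hP2 : P ^ 2 ≤ (delta + lam * pp) ^ 2 := by nlinarith
  have htau0 : 0 ≤ tau := by nlinarith
  have hdp : delta * pp ≤ phi * phi := mul_le_mul hdphi hppphi hpp0 hphi0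
  have hdp2 : lam * (delta * pp) ≤ lam * (phi * phi) :=
    mul_le_mul_of_nonneg_left hdp hlam0.le
  have hd2 : delta ^ 2 ≤ phi ^ 2 := by nlinarith
  have hd2l : lam ^ 2 * delta ^ 2 ≤ lam ^ 2 * phi ^ 2 :=
    mul_le_mul_of_nonneg_left hd2 (sq_nonneg lam)
  rcases hmle with h | h
  · have htau2 : tau ^ 2 ≤ phi ^ 2 - pp ^ 2 := by nlinarith
    have hlt : lam * tau - C ≤ lam * tau := by linarith
    have hov2 : (lam * tau - C) ^ 2 ≤ lam ^ 2 * tau ^ 2 := by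
      calc (lam * tau - C) ^ 2 ≤ (lam * tau) ^ 2 := by
            exact pow_le_pow_left₀ hov0 hlt 2
        _ = lam ^ 2 * tau ^ 2 := by ring
    have ht2 : lam ^ 2 * tau ^ 2 ≤ lam ^ 2 * (phi ^ 2 - pp ^ 2) :=
      mul_le_mul_of_nonneg_left htau2 (sq_nonneg lam)
    nlinarith [hP2, hov2, ht2, hdp2, hd2, sq_nonneg lam]
  · have htau2 : tau ^ 2 ≤ delta ^ 2 + C ^ 2 - pp ^ 2 := by nlinarith
    have hl2 : lam ^ 2 * C ^ 2 ≤ C ^ 2 := by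
      have h1l : (0:ℝ) ≤ 1 - lam ^ 2 := by nlinarith
      nlinarith [mul_nonneg h1l (sq_nonneg C)]
    have ha1 : lam ^ 2 * tau ^ 2 ≤ lam ^ 2 * (delta ^ 2 + C ^ 2 - pp ^ 2) :=
      mul_le_mul_of_nonneg_left htau2 (sq_nonneg lam)
    have ha2 : 0 ≤ C * (lam * tau - C) := mul_nonneg hC hov0
    have hov2 : (lam * tau - C) ^ 2 ≤ lam ^ 2 * (delta ^ 2 - pp ^ 2) := by
      nlinarith [ha1, ha2, hl2]
    nlinarith [hP2, hov2, hdp2, hd2, hd2l]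

set_option maxHeartbeats 1600000 in
lemma capsule_upper {a b : EuclideanSpace ℝ (Fin d)} (v x y : EuclideanSpace ℝ (Fin d))
    (hab : a ≠ b) (hv : ‖v‖ = 1) (hdir : b - a = ‖b - a‖ • v) (phi lam : ℝ)
    (hphi : Metric.infDist x (segment ℝ a b) ≤ phi)
    (hlam0 : 0 < lam) (hlam1 : lam ≤ 1)
    (hy : y ∈ capsuleSeg a b v x phi) :
    Metric.infDist (x + lam • (y - x)) (segment ℝ a b) ≤ (1 + lam) * phi := by
  set δ := Metric.infDist x (segment ℝ a b) with hδdef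
  have hδ0 : 0 ≤ δ := Metric.infDist_nonneg
  have hphi0 : 0 ≤ phi := le_trans hδ0 hphi
  set z := x + lam • (y - x) with hzdef
  have hdzx : dist z x = lam * ‖y - x‖ := by
    rw [dist_eq_norm, hzdef]
    have : x + lam • (y - x) - x = lam • (y - x) := by abel
    rw [this, norm_smul, Real.norm_eq_abs, abs_of_pos hlam0]
  unfold capsuleSeg at hy
  split_ifs at hy with hif
  · -- ball case
    have hyx : dist y x ≤ phi := by
      have h := mem_closedBall.mp hy
      rw [max_eq_left hphi] at h
      exact h
    have h1 : Metric.infDist z (segment ℝ a b) ≤ δ + dist z x :=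
      Metric.infDist_le_infDist_add_dist
    rw [hdzx] at h1
    rw [dist_eq_norm] at hyx
    nlinarith
  · -- cylinder case
    obtain ⟨hy1, hy2⟩ := hy
    obtain ⟨hts0, htsL, hδeq⟩ := else_struct v x hab hv hdir hif
    set L := ‖b - a‖ with hLdef
    set ts := ⟪x - a, v⟫_ℝ with htsdef
    set τ := ⟪y - x, v⟫_ℝ with hτdef
    set pp := ‖(y - x) - τ • v‖ with hppdef
    have hppphi : pp ≤ phi := by
      have h : pp ≤ max phi δ := hy1
      rwa [max_eq_left hphi] at h
    have hpp0 : 0 ≤ pp := norm_nonneg _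
    have hb : b = a + L • v := by
      have h : a + (b - a) = b := by abel
      rw [← h]; rw [hdir]
    have hm2 : ‖y - x‖ ^ 2 = pp ^ 2 + τ ^ 2 := norm_sq_decomp v (y - x) hv
    have hm0 : (0:ℝ) ≤ ‖y - x‖ := norm_nonneg _
    have hmle : ‖y - x‖ ≤ max phi (min (dist x a) (dist x b)) := by
      have h := mem_closedBall.mp hy2
      rwa [dist_eq_norm] at h
    -- coordinates of z
    have hza : z - a = (x - a) + lam • (y - x) := by rw [hzdef]; abel
    have htz : ⟪z - a, v⟫_ℝ = ts + lam * τ := by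
      rw [hza, inner_add_left, real_inner_smul_left]
    have hperpz : (z - a) - ⟪z - a, v⟫_ℝ • v
        = ((x - a) - ts • v) + lam • ((y - x) - τ • v) := by
      rw [htz, hza]; module
    have hPle : ‖(z - a) - ⟪z - a, v⟫_ℝ • v‖ ≤ δ + lam * pp := by
      rw [hperpz]
      calc ‖((x - a) - ts • v) + lam • ((y - x) - τ • v)‖
          ≤ ‖(x - a) - ts • v‖ + ‖lam • ((y - x) - τ • v)‖ := norm_add_le _ _
        _ = δ + lam * pp := by
            rw [norm_smul, Real.norm_eq_abs, abs_of_pos hlam0, ← hδeq]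
    set P := ‖(z - a) - ⟪z - a, v⟫_ℝ • v‖ with hPdef
    have hP0 : 0 ≤ P := norm_nonneg _
    have hxa2 : ‖x - a‖ ^ 2 = δ ^ 2 + ts ^ 2 := by
      have h := norm_sq_decomp v (x - a) hv
      rw [← htsdef, ← hδeq] at h
      exact h
    have hxb2 : ‖x - b‖ ^ 2 = δ ^ 2 + (L - ts) ^ 2 := by
      have h := dist_sq_line a v x hv L
      rw [← hb, ← htsdef, ← hδeq] at h
      rw [h]; ring
    -- the candidate point on the segment
    have key : ∀ tc : ℝ, 0 ≤ tc → tc ≤ L →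
        (ts + lam * τ - tc) ^ 2 + P ^ 2 ≤ ((1 + lam) * phi) ^ 2 →
        Metric.infDist z (segment ℝ a b) ≤ (1 + lam) * phi := by
      intro tc htc0 htcL hineq
      have hmem : a + tc • v ∈ segment ℝ a b := seg_mem_of v hab hdir htc0 htcL
      have h1 : Metric.infDist z (segment ℝ a b) ≤ dist z (a + tc • v) :=
        Metric.infDist_le_dist_of_mem hmem
      have hsq : ‖z - (a + tc • v)‖ ^ 2 = P ^ 2 + (ts + lam * τ - tc) ^ 2 := by
        rw [hPdef, ← htz]
        all_goals exact dist_sq_line a v z hv tc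
      rw [dist_eq_norm] at h1
      have h2 : ‖z - (a + tc • v)‖ ≤ (1 + lam) * phi := by
        nlinarith [norm_nonneg (z - (a + tc • v)),
          mul_nonneg (by linarith : (0:ℝ) ≤ 1 + lam) hphi0]
      linarith
    have hL0 : 0 ≤ L := norm_nonneg _
    rcases le_or_gt (ts + lam * τ) L with h2 | h2
    · rcases le_or_gt 0 (ts + lam * τ) with h1 | h1
      · -- in range
        refine key (ts + lam * τ) h1 h2 ?_
        have hz0 : (ts + lam * τ - (ts + lam * τ)) ^ 2 = 0 := by ring
        rw [hz0]
        have hle : P ≤ (1 + lam) * phi := by nlinarith [hPle]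
        have hsq2 := pow_le_pow_left₀ hP0 hle 2
        linarith
      · -- below 0 : tc = 0, endpoint a
        refine key 0 le_rfl hL0 ?_
        have harith := arith_key lam phi δ pp (-τ) ts (‖y - x‖) (‖x - a‖) P
          (lam * (-τ) - ts) hlam0 hlam1 hδ0 hphi hpp0 hppphi hts0 hm0
          (by rw [hm2]; ring) hxa2 (norm_nonneg _)
          ?_ hP0 hPle rfl (by linarith)
        · nlinarith [harith]
        · rcases le_max_iff.mp hmle with h | h
          · exact Or.inl h
          · exact Or.inr (le_trans h (by rw [dist_eq_norm]; exact min_le_left _ _))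
    · -- above L : tc = L, endpoint b
      refine key L hL0 le_rfl ?_
      have harith := arith_key lam phi δ pp τ (L - ts) (‖y - x‖) (‖x - b‖) P
        (ts + lam * τ - L) hlam0 hlam1 hδ0 hphi hpp0 hppphi (by linarith) hm0
        hm2 (by rw [hxb2]) (norm_nonneg _)
        ?_ hP0 hPle (by ring) (by linarith)
      · nlinarith [harith]
      · rcases le_max_iff.mp hmle with h | h
        · exact Or.inl h
        · exact Or.inr (le_trans h (by rw [dist_eq_norm]; exact min_le_right _ _))

set_option maxHeartbeats 1600000 in
lemma capsule_lower {a b : EuclideanSpace ℝ (Fin d)} (v x y : EuclideanSpace ℝ (Fin d))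
    (hab : a ≠ b) (hv : ‖v‖ = 1) (hdir : b - a = ‖b - a‖ • v) (phi lam : ℝ)
    (hphi : phi ≤ Metric.infDist x (segment ℝ a b))
    (hlam0 : 0 < lam) (hlam1 : lam ≤ 1)
    (hy : y ∈ capsuleSeg a b v x phi) :
    (1 - lam) * Metric.infDist x (segment ℝ a b)
      ≤ Metric.infDist (x + lam • (y - x)) (segment ℝ a b) := by
  set δ := Metric.infDist x (segment ℝ a b) with hδdef
  have hδ0 : 0 ≤ δ := Metric.infDist_nonneg
  set z := x + lam • (y - x) with hzdef
  have hdxz : dist x z = lam * ‖y - x‖ := by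
    rw [dist_eq_norm, hzdef]
    have : x - (x + lam • (y - x)) = -(lam • (y - x)) := by abel
    rw [this, norm_neg, norm_smul, Real.norm_eq_abs, abs_of_pos hlam0]
  unfold capsuleSeg at hy
  split_ifs at hy with hif
  · -- ball case
    have hyx : dist y x ≤ δ := by
      have h := mem_closedBall.mp hy
      rwa [max_eq_right hphi] at h
    have h1 : δ ≤ Metric.infDist z (segment ℝ a b) + dist x z :=
      Metric.infDist_le_infDist_add_dist
    rw [hdxz] at h1
    rw [dist_eq_norm] at hyx
    nlinarith [norm_nonneg (y - x)]
  · -- cylinder case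
    obtain ⟨hy1, -⟩ := hy
    obtain ⟨-, -, hδeq⟩ := else_struct v x hab hv hdir hif
    set ts := ⟪x - a, v⟫_ℝ with htsdef
    set τ := ⟪y - x, v⟫_ℝ with hτdef
    set pp := ‖(y - x) - τ • v‖ with hppdef
    have hppδ : pp ≤ δ := by
      have h : pp ≤ max phi δ := hy1
      rwa [max_eq_right hphi] at h
    have hza : z - a = (x - a) + lam • (y - x) := by rw [hzdef]; abel
    have htz : ⟪z - a, v⟫_ℝ = ts + lam * τ := by
      rw [hza, inner_add_left, real_inner_smul_left]
    have hperpz : (z - a) - ⟪z - a, v⟫_ℝ • v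
        = ((x - a) - ts • v) + lam • ((y - x) - τ • v) := by
      rw [htz, hza]; module
    have h1 : ‖(x - a) - ts • v‖ - lam * pp ≤ ‖(z - a) - ⟪z - a, v⟫_ℝ • v‖ := by
      have htri : ‖(x - a) - ts • v‖
          ≤ ‖(z - a) - ⟪z - a, v⟫_ℝ • v‖ + ‖lam • ((y - x) - τ • v)‖ := by
        rw [hperpz]
        calc ‖(x - a) - ts • v‖
            = ‖(((x - a) - ts • v) + lam • ((y - x) - τ • v))
                + (-(lam • ((y - x) - τ • v)))‖ := by congr 1; abel
          _ ≤ ‖((x - a) - ts • v) + lam • ((y - x) - τ • v)‖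
                + ‖-(lam • ((y - x) - τ • v))‖ := norm_add_le _ _
          _ = _ := by rw [norm_neg]
      rw [norm_smul, Real.norm_eq_abs, abs_of_pos hlam0] at htri
      linarith
    have h2 := infDist_ge_perp v z hv hdir
    rw [← hδeq] at h1
    nlinarith [h1, h2, mul_le_mul_of_nonneg_left hppδ hlam0.le]

end Helpers

/-- For `0 < ε ≤ 1` and `0 < λ ≤ ε/3`, if `s_x` is a nearest
segment of `x`, then for every `z ∈ C^λ(x, φ(x))`,
`dist(z, s_x) ≤ (1+ε)·min_{s ∈ S} dist(z, s)`. -/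
theorem nearest_of_center_is_ann {d n : ℕ} (hd : 1 ≤ d) (hn : 2 ≤ n)
    (a b v : Fin n → EuclideanSpace ℝ (Fin d))
    (hab : ∀ i, a i ≠ b i)
    (hv : ∀ i, ‖v i‖ = 1)
    (hdir : ∀ i, b i - a i = ‖b i - a i‖ • v i)
    (hdisj : ∀ i j, i ≠ j → Disjoint (segment ℝ (a i) (b i)) (segment ℝ (a j) (b j)))
    (eps : ℝ) (heps0 : 0 < eps) (heps1 : eps ≤ 1)
    (lam : ℝ) (hlam0 : 0 < lam) (hlam : lam ≤ eps / 3)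
    (x : EuclideanSpace ℝ (Fin d))
    (kx : Fin n)
    (hkx : ∀ i, Metric.infDist x (segment ℝ (a kx) (b kx)) ≤
      Metric.infDist x (segment ℝ (a i) (b i)))
    (z : EuclideanSpace ℝ (Fin d))
    (hz : z ∈ scaleAbout x lam (capsuleFam a b v x (lfs a b x))) :
    Metric.infDist z (segment ℝ (a kx) (b kx)) ≤
      (1 + eps) * ⨅ i : Fin n, Metric.infDist z (segment ℝ (a i) (b i)) := by
  simp only [scaleAbout, Set.mem_image] at hz
  obtain ⟨y, hy, rfl⟩ := hz
  simp only [capsuleFam, Set.mem_iInter] at hy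
  have hlam1 : lam ≤ 1 := by linarith
  have hzeq : (AffineMap.homothety x lam) y = x + lam • (y - x) := by
    rw [AffineMap.homothety_apply]
    simp only [vsub_eq_sub, vadd_eq_add]
    abel
  rw [hzeq]
  have hne : Nonempty (Fin n) := ⟨⟨0, by omega⟩⟩
  have hset_bdd : BddBelow {t | ∃ i j : Fin n, i < j ∧
      t = max (Metric.infDist x (segment ℝ (a i) (b i)))
              (Metric.infDist x (segment ℝ (a j) (b j)))} := by
    refine ⟨0, ?_⟩
    rintro t ⟨i, j, hij, rfl⟩
    exact le_trans Metric.infDist_nonneg (le_max_left _ _)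
  have hi01 : (⟨0, by omega⟩ : Fin n) < ⟨1, by omega⟩ := Fin.mk_lt_mk.mpr (by omega)
  have hset_ne : {t | ∃ i j : Fin n, i < j ∧
      t = max (Metric.infDist x (segment ℝ (a i) (b i)))
              (Metric.infDist x (segment ℝ (a j) (b j)))}.Nonempty :=
    ⟨_, ⟨_, _, hi01, rfl⟩⟩
  have hδφ : Metric.infDist x (segment ℝ (a kx) (b kx)) ≤ lfs a b x := by
    rw [lfs]
    apply le_csInf hset_ne
    rintro t ⟨i, j, hij, rfl⟩
    exact le_trans (hkx i) (le_max_left _ _)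
  have hφδ : ∀ i, i ≠ kx → lfs a b x ≤ Metric.infDist x (segment ℝ (a i) (b i)) := by
    intro i hi
    rcases lt_or_gt_of_ne hi with h | h
    · calc lfs a b x ≤ max (Metric.infDist x (segment ℝ (a i) (b i)))
            (Metric.infDist x (segment ℝ (a kx) (b kx))) := csInf_le hset_bdd ⟨i, kx, h, rfl⟩
        _ = Metric.infDist x (segment ℝ (a i) (b i)) := max_eq_left (hkx i)
    · calc lfs a b x ≤ max (Metric.infDist x (segment ℝ (a kx) (b kx)))
            (Metric.infDist x (segment ℝ (a i) (b i))) := csInf_le hset_bdd ⟨kx, i, h, rfl⟩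
        _ = Metric.infDist x (segment ℝ (a i) (b i)) := max_eq_right (hkx i)
  have hφ0 : 0 ≤ lfs a b x := le_trans Metric.infDist_nonneg hδφ
  have hup : Metric.infDist (x + lam • (y - x)) (segment ℝ (a kx) (b kx))
      ≤ (1 + lam) * lfs a b x :=
    capsule_upper (v kx) x y (hab kx) (hv kx) (hdir kx) _ lam hδφ hlam0 hlam1 (hy kx)
  have hkey : ∀ j, Metric.infDist (x + lam • (y - x)) (segment ℝ (a kx) (b kx))
      ≤ (1 + eps) * Metric.infDist (x + lam • (y - x)) (segment ℝ (a j) (b j)) := by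
    intro j
    by_cases hj : j = kx
    · subst hj
      nlinarith [Metric.infDist_nonneg
        (x := x + lam • (y - x)) (s := segment ℝ (a j) (b j))]
    · have hlow := capsule_lower (v j) x y (hab j) (hv j) (hdir j) _ lam
        (hφδ j hj) hlam0 hlam1 (hy j)
      have h1 : (1 - lam) * lfs a b x
          ≤ Metric.infDist (x + lam • (y - x)) (segment ℝ (a j) (b j)) := by
        have h1a := mul_le_mul_of_nonneg_left (hφδ j hj) (by linarith : (0:ℝ) ≤ 1 - lam)
        linarith
      have hc : 1 + lam ≤ (1 + eps) * (1 - lam) := by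
        nlinarith [mul_nonneg hlam0.le (by linarith : (0:ℝ) ≤ 1 - eps)]
      calc Metric.infDist (x + lam • (y - x)) (segment ℝ (a kx) (b kx))
          ≤ (1 + lam) * lfs a b x := hup
        _ ≤ ((1 + eps) * (1 - lam)) * lfs a b x := mul_le_mul_of_nonneg_right hc hφ0
        _ = (1 + eps) * ((1 - lam) * lfs a b x) := by ring
        _ ≤ (1 + eps) * Metric.infDist (x + lam • (y - x)) (segment ℝ (a j) (b j)) :=
            mul_le_mul_of_nonneg_left h1 (by linarith)
  obtain ⟨j0, hj0⟩ := Finite.exists_min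
    (fun i => Metric.infDist (x + lam • (y - x)) (segment ℝ (a i) (b i)))
  have hiInf : (⨅ i, Metric.infDist (x + lam • (y - x)) (segment ℝ (a i) (b i))) =
      Metric.infDist (x + lam • (y - x)) (segment ℝ (a j0) (b j0)) :=
    le_antisymm (ciInf_le (Finite.bddBelow_range _) j0) (le_ciInf hj0)
  rw [hiInf]
  exact hkey j0
end
end

section
/- For any x ∈ ℝᵈ and r > 0: (i) for every γ ≥ 1, C(x, γ·r) ⊆ C^γ(x, r); and (ii) for every 0 < λ ≤ 1, C^λ(x, r) ⊆ C(x, λ·r). -/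
noncomputable section

open Metric Set MeasureTheory
open scoped InnerProductSpace Classical

variable {d n : ℕ}

lemma capsuleSeg_shrink (a b v x y : EuclideanSpace ℝ (Fin d)) (R c : ℝ)
    (hc0 : 0 < c) (hc1 : c ≤ 1) (hy : y ∈ capsuleSeg a b v x R) :
    x + c • (y - x) ∈ capsuleSeg a b v x (c * R) := by
  have hD : 0 ≤ Metric.infDist x (segment ℝ a b) := Metric.infDist_nonneg
  have hM : 0 ≤ min (dist x a) (dist x b) := le_min dist_nonneg dist_nonneg
  have key : ∀ D : ℝ, 0 ≤ D → c * max R D ≤ max (c * R) D := by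
    intro D hD0
    rw [mul_max_of_nonneg _ _ hc0.le]
    exact max_le_max le_rfl (by nlinarith)
  have hsub : x + c • (y - x) - x = c • (y - x) := by abel
  unfold capsuleSeg at hy ⊢
  split_ifs at hy ⊢ with h
  · rw [Metric.mem_closedBall, dist_eq_norm, hsub, norm_smul, Real.norm_eq_abs,
      abs_of_pos hc0]
    calc c * ‖y - x‖ ≤ c * max R _ := by
          have := Metric.mem_closedBall.mp hy
          rw [dist_eq_norm] at this
          nlinarith
      _ ≤ _ := key _ hD
  · obtain ⟨h1, h2⟩ := hy
    constructor
    · show ‖_‖ ≤ _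
      rw [hsub, inner_smul_left]
      have : c • (y - x) - (starRingEnd ℝ c * ⟪y - x, v⟫_ℝ) • v
          = c • ((y - x) - ⟪y - x, v⟫_ℝ • v) := by
        simp [smul_sub, mul_smul]
      rw [this, norm_smul, Real.norm_eq_abs, abs_of_pos hc0]
      calc c * ‖(y - x) - ⟪y - x, v⟫_ℝ • v‖ ≤ c * max R _ := by
            have : ‖(y - x) - ⟪y - x, v⟫_ℝ • v‖ ≤ max R _ := h1
            nlinarith
        _ ≤ _ := key _ hD
    · rw [Metric.mem_closedBall, dist_eq_norm, hsub, norm_smul, Real.norm_eq_abs,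
        abs_of_pos hc0]
      calc c * ‖y - x‖ ≤ c * max R _ := by
            have := Metric.mem_closedBall.mp h2
            rw [dist_eq_norm] at this
            nlinarith
        _ ≤ _ := key _ hM

/-- (i) For `γ ≥ 1`, `C(x, γr) ⊆ C^γ(x, r)`; and
(ii) for `0 < λ ≤ 1`, `C^λ(x, r) ⊆ C(x, λr)`. -/
theorem capsule_radius_vs_scaling {d n : ℕ} (hd : 1 ≤ d) (hn : 1 ≤ n)
    (a b v : Fin n → EuclideanSpace ℝ (Fin d))
    (hab : ∀ i, a i ≠ b i)
    (hv : ∀ i, ‖v i‖ = 1)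
    (hdir : ∀ i, b i - a i = ‖b i - a i‖ • v i)
    (hdisj : ∀ i j, i ≠ j → Disjoint (segment ℝ (a i) (b i)) (segment ℝ (a j) (b j)))
    (x : EuclideanSpace ℝ (Fin d)) (r : ℝ) (hr : 0 < r) :
    (∀ gam : ℝ, 1 ≤ gam →
      capsuleFam a b v x (gam * r) ⊆ scaleAbout x gam (capsuleFam a b v x r)) ∧
    (∀ lam : ℝ, 0 < lam → lam ≤ 1 →
      scaleAbout x lam (capsuleFam a b v x r) ⊆ capsuleFam a b v x (lam * r)) := by
  constructor
  · intro gam hgam y hy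
    have hg0 : 0 < gam := lt_of_lt_of_le one_pos hgam
    refine ⟨x + gam⁻¹ • (y - x), ?_, ?_⟩
    · simp only [capsuleFam, Set.mem_iInter] at hy ⊢
      intro i
      have := capsuleSeg_shrink (a i) (b i) (v i) x y (gam * r) gam⁻¹
        (inv_pos.mpr hg0) (inv_le_one_of_one_le₀ hgam)
        (hy i)
      rwa [show gam⁻¹ * (gam * r) = r by field_simp] at this
    · simp only [AffineMap.homothety_apply, vsub_eq_sub, vadd_eq_add]
      rw [show x + gam⁻¹ • (y - x) - x = gam⁻¹ • (y - x) by abel,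
        smul_smul, mul_inv_cancel₀ hg0.ne', one_smul]
      abel
  · intro lam hl0 hl1 y hy
    obtain ⟨z, hz, rfl⟩ := hy
    simp only [capsuleFam, Set.mem_iInter] at hz ⊢
    intro i
    have := capsuleSeg_shrink (a i) (b i) (v i) x z r lam hl0 hl1
      (hz i)
    simpa [AffineMap.homothety_apply, add_comm] using this
end
end

section
/- Let x ∈ ℝᵈ and r > 0, and let vol denote d-dimensional Lebesgue measure. Then: (i) for every λ > 0, vol(C^λ(x, r)) = λᵈ·vol(C(x, r)); and (ii) for every β ≥ 1, vol(C(x, β·r)) ≤ βᵈ·vol(C(x, r)). -/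
noncomputable section

open Metric Set MeasureTheory
open scoped InnerProductSpace Classical

variable {d n : ℕ}

/-- (i) `vol(C^λ(x, r)) = λᵈ · vol(C(x, r))` for `λ > 0`; and
(ii) `vol(C(x, βr)) ≤ βᵈ · vol(C(x, r))` for `β ≥ 1`. -/
theorem capsule_volume_bounds {d n : ℕ} (hd : 1 ≤ d) (hn : 1 ≤ n)
    (a b v : Fin n → EuclideanSpace ℝ (Fin d))
    (hab : ∀ i, a i ≠ b i)
    (hv : ∀ i, ‖v i‖ = 1)
    (hdir : ∀ i, b i - a i = ‖b i - a i‖ • v i)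
    (hdisj : ∀ i j, i ≠ j → Disjoint (segment ℝ (a i) (b i)) (segment ℝ (a j) (b j)))
    (x : EuclideanSpace ℝ (Fin d)) (r : ℝ) (hr : 0 < r) :
    (∀ lam : ℝ, 0 < lam →
      volume (scaleAbout x lam (capsuleFam a b v x r)) =
        ENNReal.ofReal (lam ^ d) * volume (capsuleFam a b v x r)) ∧
    (∀ beta : ℝ, 1 ≤ beta →
      volume (capsuleFam a b v x (beta * r)) ≤
        ENNReal.ofReal (beta ^ d) * volume (capsuleFam a b v x r)) := by
  have hfin : Module.finrank ℝ (EuclideanSpace ℝ (Fin d)) = d :=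
    finrank_euclideanSpace_fin
  have part1 : ∀ lam : ℝ, 0 < lam → ∀ C : Set (EuclideanSpace ℝ (Fin d)),
      volume (scaleAbout x lam C) = ENNReal.ofReal (lam ^ d) * volume C := by
    intro lam hlam C
    rw [scaleAbout, MeasureTheory.Measure.addHaar_image_homothety, hfin, abs_of_pos (pow_pos hlam d)]
  refine ⟨fun lam hlam => part1 lam hlam _, fun beta hbeta => ?_⟩
  have hb0 : (0:ℝ) < beta := lt_of_lt_of_le one_pos hbeta
  have key : ∀ t D : ℝ, 0 ≤ D → t ≤ max (beta * r) D → beta⁻¹ * t ≤ max r D := by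
    intro t D hD ht
    rw [inv_mul_le_iff₀ hb0]
    calc t ≤ max (beta * r) D := ht
      _ ≤ beta * max r D := by
          rw [mul_max_of_nonneg _ _ hb0.le]
          exact max_le_max le_rfl (le_mul_of_one_le_left hD hbeta)
  have hsub : capsuleFam a b v x (beta * r) ⊆ scaleAbout x beta (capsuleFam a b v x r) := by
    intro y hy
    refine ⟨x + beta⁻¹ • (y - x), ?_, ?_⟩
    · simp only [capsuleFam, mem_iInter] at hy ⊢
      intro i
      have hyi := hy i
      have hD : 0 ≤ Metric.infDist x (segment ℝ (a i) (b i)) := Metric.infDist_nonneg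
      have hDm : 0 ≤ min (dist x (a i)) (dist x (b i)) :=
        le_min dist_nonneg dist_nonneg
      have hnorm : dist (x + beta⁻¹ • (y - x)) x = beta⁻¹ * ‖y - x‖ := by
        rw [dist_eq_norm, add_sub_cancel_left, norm_smul, Real.norm_eq_abs,
          abs_of_pos (inv_pos.mpr hb0)]
      rw [capsuleSeg] at hyi ⊢
      split_ifs at hyi ⊢ with h
      · rw [mem_closedBall] at hyi ⊢
        rw [hnorm]
        exact key _ _ hD (by rwa [dist_eq_norm] at hyi)
      · obtain ⟨h1, h2⟩ := hyi
        refine ⟨?_, ?_⟩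
        · simp only [mem_setOf_eq] at h1 ⊢
          have : (x + beta⁻¹ • (y - x) - x) - ⟪x + beta⁻¹ • (y - x) - x, v i⟫_ℝ • v i
              = beta⁻¹ • ((y - x) - ⟪y - x, v i⟫_ℝ • v i) := by
            rw [add_sub_cancel_left, real_inner_smul_left]
            module
          rw [this, norm_smul, Real.norm_eq_abs, abs_of_pos (inv_pos.mpr hb0)]
          exact key _ _ hD h1
        · rw [mem_closedBall] at h2 ⊢
          rw [hnorm]
          exact key _ _ hDm (by rwa [dist_eq_norm] at h2)
    · show AffineMap.homothety x beta _ = y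
      rw [AffineMap.homothety_apply]
      simp [smul_smul, mul_inv_cancel₀ hb0.ne', vsub_eq_sub, vadd_eq_add,
        add_sub_cancel_left]
  calc volume (capsuleFam a b v x (beta * r))
      ≤ volume (scaleAbout x beta (capsuleFam a b v x r)) := measure_mono hsub
    _ = ENNReal.ofReal (beta ^ d) * volume (capsuleFam a b v x r) := part1 beta hb0 _
end
end

section
/- (Expansion-Containment with local feature size) Let 0 < λ < 1 and set β = (3+λ)(1+λ)/(1−λ)². For any two points x, y ∈ ℝᵈ, if C^λ(x, φ(x)) ∩ C^λ(y, φ(y)) ≠ ∅, then C^λ(y, φ(y)) ⊆ C^{βλ}(x, φ(x)). -/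
noncomputable section

open Metric Set MeasureTheory
open scoped InnerProductSpace Classical

variable {d n : ℕ}

namespace Cap


variable {d : ℕ}

local notation "E" => EuclideanSpace ℝ (Fin d)




lemma inner_orth (v w : E) (hv : ‖v‖ = 1) : ⟪w - ⟪w, v⟫_ℝ • v, v⟫_ℝ = 0 := by
  rw [inner_sub_left, real_inner_smul_left, real_inner_self_eq_norm_sq, hv]
  ring

lemma norm_sq_orth (v w : E) (hv : ‖v‖ = 1) :
    ‖w‖ ^ 2 = ‖w - ⟪w, v⟫_ℝ • v‖ ^ 2 + ⟪w, v⟫_ℝ ^ 2 := by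
  have h : w = (w - ⟪w, v⟫_ℝ • v) + ⟪w, v⟫_ℝ • v := by abel
  calc ‖w‖ ^ 2 = ‖(w - ⟪w, v⟫_ℝ • v) + ⟪w, v⟫_ℝ • v‖ ^ 2 := by rw [← h]
    _ = ‖w - ⟪w, v⟫_ℝ • v‖ ^ 2 + 2 * ⟪w - ⟪w, v⟫_ℝ • v, ⟪w, v⟫_ℝ • v⟫_ℝ
        + ‖⟪w, v⟫_ℝ • v‖ ^ 2 := norm_add_sq_real _ _
    _ = ‖w - ⟪w, v⟫_ℝ • v‖ ^ 2 + ⟪w, v⟫_ℝ ^ 2 := by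
        rw [real_inner_smul_right, inner_orth v w hv, norm_smul, hv]
        simp [sq_abs]

lemma norm_orth_le (v w : E) (hv : ‖v‖ = 1) : ‖w - ⟪w, v⟫_ℝ • v‖ ≤ ‖w‖ := by
  have h := norm_sq_orth v w hv
  nlinarith [norm_nonneg w, norm_nonneg (w - ⟪w, v⟫_ℝ • v), sq_nonneg (⟪w, v⟫_ℝ)]

lemma abs_inner_le (v w : E) (hv : ‖v‖ = 1) : |⟪w, v⟫_ℝ| ≤ ‖w‖ := by
  have := abs_real_inner_le_norm w v
  rwa [hv, mul_one] at this

lemma orth_sub (v u w : E) :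
    (u - w) - ⟪u - w, v⟫_ℝ • v = (u - ⟪u, v⟫_ℝ • v) - (w - ⟪w, v⟫_ℝ • v) := by
  rw [inner_sub_left, sub_smul]; abel

lemma orth_smul (c : ℝ) (v u : E) :
    (c • u) - ⟪c • u, v⟫_ℝ • v = c • (u - ⟪u, v⟫_ℝ • v) := by
  rw [real_inner_smul_left, smul_sub, smul_smul]

lemma orth_neg (v u : E) : (-u) - ⟪-u, v⟫_ℝ • v = -(u - ⟪u, v⟫_ℝ • v) := by
  rw [inner_neg_left, neg_smul]; abel

/-- decomposition `y - a = (x - a) - (p - y) + (p - x)` on orthogonal parts -/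
lemma orth_chain (v a x y p : E) :
    (y - a) - ⟪y - a, v⟫_ℝ • v =
      ((x - a) - ⟪x - a, v⟫_ℝ • v) - ((p - y) - ⟪p - y, v⟫_ℝ • v)
        + ((p - x) - ⟪p - x, v⟫_ℝ • v) := by
  have h : y - a = ((x - a) - (p - y)) + (p - x) := by abel
  rw [h, inner_add_left, inner_sub_left, add_smul, sub_smul]
  abel






lemma seg_mem_iff {a b v : E} {L : ℝ} (hdir : b - a = L • v) (hL : 0 < L) (q : E) :
    q ∈ segment ℝ a b ↔ ∃ s : ℝ, s ∈ Icc (0:ℝ) L ∧ q = a + s • v := by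
  rw [segment_eq_image']
  constructor
  · rintro ⟨t, ht, rfl⟩
    refine ⟨t * L, ⟨mul_nonneg ht.1 (le_of_lt hL), ?_⟩, ?_⟩
    · nlinarith [ht.2]
    · simp only [hdir, smul_smul]
  · rintro ⟨s, hs, rfl⟩
    refine ⟨s / L, ⟨div_nonneg hs.1 (le_of_lt hL), ?_⟩, ?_⟩
    · rw [div_le_one hL]; exact hs.2
    · simp only [hdir, smul_smul, div_mul_cancel₀ _ (ne_of_gt hL)]

lemma dist_point_param (a v : E) (hv : ‖v‖ = 1) (s : ℝ) (w : E) :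
    ‖w - (a + s • v)‖ ^ 2
      = ‖(w - a) - ⟪w - a, v⟫_ℝ • v‖ ^ 2 + (⟪w - a, v⟫_ℝ - s) ^ 2 := by
  have h : w - (a + s • v)
      = ((w - a) - ⟪w - a, v⟫_ℝ • v) + (⟪w - a, v⟫_ℝ - s) • v := by
    rw [sub_smul]; abel
  rw [h, norm_add_sq_real, real_inner_smul_right, inner_orth v (w - a) hv, norm_smul, hv]
  simp [sq_abs]

lemma le_infDist' {s : Set E} (hs : s.Nonempty) {x : E} {c : ℝ}
    (h : ∀ q ∈ s, c ≤ dist x q) : c ≤ Metric.infDist x s := by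
  by_contra hc
  push_neg at hc
  rw [Metric.infDist_lt_iff hs] at hc
  obtain ⟨q, hq, hlt⟩ := hc
  exact absurd (h q hq) (not_le.mpr hlt)

/-- The squared distance to a segment. -/
lemma infDist_seg_sq {a b v : E} {L : ℝ} (hv : ‖v‖ = 1) (hdir : b - a = L • v)
    (hL : 0 < L) (w : E) :
    (Metric.infDist w (segment ℝ a b)) ^ 2
      = ‖(w - a) - ⟪w - a, v⟫_ℝ • v‖ ^ 2
        + (⟪w - a, v⟫_ℝ - min (max ⟪w - a, v⟫_ℝ 0) L) ^ 2 := by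
  set τ := ⟪w - a, v⟫_ℝ with hτ
  set g := ‖(w - a) - τ • v‖ with hg
  set k := min (max τ 0) L with hk
  have hk0 : 0 ≤ k := le_min (le_max_right _ _) (le_of_lt hL)
  have hkL : k ≤ L := min_le_right _ _
  have hmem : a + k • v ∈ segment ℝ a b :=
    (seg_mem_iff hdir hL _).2 ⟨k, ⟨hk0, hkL⟩, rfl⟩
  have hub : Metric.infDist w (segment ℝ a b) ≤ ‖w - (a + k • v)‖ := by
    have := Metric.infDist_le_dist_of_mem hmem (x := w)
    rwa [dist_eq_norm] at this
  have hdk : ‖w - (a + k • v)‖ ^ 2 = g ^ 2 + (τ - k) ^ 2 := dist_point_param a v hv k w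
  have hlb : Real.sqrt (g ^ 2 + (τ - k) ^ 2) ≤ Metric.infDist w (segment ℝ a b) := by
    apply le_infDist' ⟨a, left_mem_segment ℝ a b⟩
    intro q hq
    obtain ⟨s, hs, rfl⟩ := (seg_mem_iff hdir hL q).1 hq
    have hds : dist w (a + s • v) ^ 2 = g ^ 2 + (τ - s) ^ 2 := by
      rw [dist_eq_norm]; exact dist_point_param a v hv s w
    have hcl : (τ - k) ^ 2 ≤ (τ - s) ^ 2 := by
      rcases le_or_gt τ 0 with h1 | h1
      · have hk' : k = 0 := by
          rw [hk, max_eq_right h1, min_eq_left (le_of_lt hL)]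
        nlinarith [hs.1, hs.2]
      · rcases le_or_gt τ L with h2 | h2
        · have hk' : k = τ := by
            rw [hk, max_eq_left (le_of_lt h1), min_eq_left h2]
          nlinarith
        · have hk' : k = L := by
            rw [hk, max_eq_left (le_of_lt h1), min_eq_right (le_of_lt h2)]
          nlinarith [hs.1, hs.2]
    calc Real.sqrt (g ^ 2 + (τ - k) ^ 2) ≤ Real.sqrt (dist w (a + s • v) ^ 2) := by
          apply Real.sqrt_le_sqrt; rw [hds]; nlinarith
      _ = dist w (a + s • v) := Real.sqrt_sq dist_nonneg
  have h1 : (Metric.infDist w (segment ℝ a b)) ^ 2 ≤ g ^ 2 + (τ - k) ^ 2 := by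
    calc (Metric.infDist w (segment ℝ a b)) ^ 2 ≤ ‖w - (a + k • v)‖ ^ 2 :=
          pow_le_pow_left₀ Metric.infDist_nonneg hub 2
      _ = g ^ 2 + (τ - k) ^ 2 := hdk
  have h2 : g ^ 2 + (τ - k) ^ 2 ≤ (Metric.infDist w (segment ℝ a b)) ^ 2 := by
    have hnn : (0:ℝ) ≤ g ^ 2 + (τ - k) ^ 2 := by positivity
    calc g ^ 2 + (τ - k) ^ 2 = Real.sqrt (g ^ 2 + (τ - k) ^ 2) ^ 2 := (Real.sq_sqrt hnn).symm
      _ ≤ (Metric.infDist w (segment ℝ a b)) ^ 2 :=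
          pow_le_pow_left₀ (Real.sqrt_nonneg _) hlb 2
  linarith

lemma dist_a_sq (a : E) {v : E} (hv : ‖v‖ = 1) (w : E) :
    dist w a ^ 2 = ‖(w - a) - ⟪w - a, v⟫_ℝ • v‖ ^ 2 + ⟪w - a, v⟫_ℝ ^ 2 := by
  have := dist_point_param a v hv 0 w
  simpa [dist_eq_norm] using this

lemma dist_b_sq {a b v : E} {L : ℝ} (hv : ‖v‖ = 1) (hdir : b - a = L • v) (w : E) :
    dist w b ^ 2
      = ‖(w - a) - ⟪w - a, v⟫_ℝ • v‖ ^ 2 + (⟪w - a, v⟫_ℝ - L) ^ 2 := by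
  have hb : b = a + L • v := by rw [← hdir]; abel
  have := dist_point_param a v hv L w
  rw [← hb] at this
  rwa [dist_eq_norm]


lemma le_of_sq_le_sq' {a b : ℝ} (hb : 0 ≤ b) (h : a ^ 2 ≤ b ^ 2) : a ≤ b := by
  nlinarith [sq_nonneg (a + b), sq_nonneg (a - b)]

/-- Pure real-arithmetic core of the single-segment estimate. -/
lemma core_arith {lam κ L rx ry fx fy gx gy τx τy exa exb eya eyb α s γ Ppx Ppy : ℝ}
    (hL : 0 < L) (hlam0 : 0 < lam) (hlam1 : lam < 1)
    (hκ0 : 0 ≤ κ) (hκsq : κ ^ 2 = (1 + lam) ^ 2 + lam ^ 2)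
    (hfx0 : 0 ≤ fx) (hfy0 : 0 ≤ fy) (hgx0 : 0 ≤ gx) (hgy0 : 0 ≤ gy)
    (hα0 : 0 ≤ α) (hs0 : 0 ≤ s) (hPpx0 : 0 ≤ Ppx) (hPpy0 : 0 ≤ Ppy)
    (hexa0 : 0 ≤ exa) (hexb0 : 0 ≤ exb) (heya0 : 0 ≤ eya) (heyb0 : 0 ≤ eyb)
    (Hfx : fx ^ 2 = gx ^ 2 + (τx - min (max τx 0) L) ^ 2)
    (Hfy : fy ^ 2 = gy ^ 2 + (τy - min (max τy 0) L) ^ 2)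
    (Hdxa : exa ^ 2 = gx ^ 2 + τx ^ 2) (Hdxb : exb ^ 2 = gx ^ 2 + (τx - L) ^ 2)
    (Hdya : eya ^ 2 = gy ^ 2 + τy ^ 2) (Hdyb : eyb ^ 2 = gy ^ 2 + (τy - L) ^ 2)
    (hchain : gy ≤ gx + α + γ)
    (hV2 : α ^ 2 + s ^ 2 = Ppy ^ 2)
    (hV3 : |τy - τx| ≤ s + Ppx)
    (hV4 : fy ≤ fx + Ppy + Ppx)
    (hγ : γ ≤ lam * max rx fx)
    (hPpx : Ppx ≤ lam * max rx (min exa exb))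
    (hα : α ≤ lam * max ry fy)
    (hPpy : Ppy ≤ lam * max ry (min eya eyb)) :
    fy ≤ κ * max rx fx + lam * max ry fy := by
  obtain ⟨Mx, hMxdef⟩ : ∃ t, t = max rx fx := ⟨_, rfl⟩
  obtain ⟨Ry, hRydef⟩ : ∃ t, t = max ry fy := ⟨_, rfl⟩
  rw [← hMxdef] at hγ
  rw [← hRydef] at hα
  rw [← hMxdef, ← hRydef]
  have hMx0 : 0 ≤ Mx := hMxdef ▸ le_trans hfx0 (le_max_right _ _)
  have hRy0 : 0 ≤ Ry := hRydef ▸ le_trans hfy0 (le_max_right _ _)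
  have hκge : 1 + lam ≤ κ := by
    apply le_of_sq_le_sq' hκ0
    rw [hκsq]; nlinarith only [sq_nonneg lam]
  have hgxfx : gx ≤ fx := by
    apply le_of_sq_le_sq' hfx0
    nlinarith only [Hfx, sq_nonneg (τx - min (max τx 0) L)]
  have hfxMx : fx ≤ Mx := hMxdef ▸ le_max_right _ _
  have hrxMx : rx ≤ Mx := hMxdef ▸ le_max_left _ _
  by_cases hin : 0 ≤ τy ∧ τy ≤ L
  · -- Case I : y projects inside the segment
    have hcl : min (max τy 0) L = τy := by rw [max_eq_left hin.1, min_eq_left hin.2]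
    rw [hcl] at Hfy
    have hfygy : fy ≤ gy := by
      apply le_of_sq_le_sq' hgy0
      nlinarith only [Hfy]
    have h9 : fy ≤ (1 + lam) * Mx + lam * Ry := by
      have h2 : gx ≤ Mx := le_trans hgxfx hfxMx
      nlinarith only [hfygy, hchain, hα, hγ, h2, hMxdef, hRydef]
    nlinarith only [h9, mul_le_mul_of_nonneg_right hκge hMx0]
  · -- Case II : y projects outside the segment
    have hout : τy < 0 ∨ L < τy := by
      rcases lt_or_ge τy 0 with h | h
      · exact Or.inl h
      · rcases le_or_gt τy L with h' | h'
        · exact absurd ⟨h, h'⟩ hin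
        · exact Or.inr h'
    -- nearest endpoint distance equals segment distance at y
    have heyf : min eya eyb = fy := by
      rcases hout with h | h
      · have hcl : min (max τy 0) L = 0 := by
          rw [max_eq_right (le_of_lt h), min_eq_left (le_of_lt hL)]
        rw [hcl] at Hfy
        have h1 : eya = fy := by
          have he : eya ^ 2 = fy ^ 2 := by rw [Hdya, Hfy]; ring
          nlinarith only [he, heya0, hfy0]
        have h2 : eya ≤ eyb := by
          apply le_of_sq_le_sq' heyb0
          nlinarith only [Hdya, Hdyb, h, hL]
        rw [min_eq_left h2, h1]
      · have hcl : min (max τy 0) L = L := by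
          rw [max_eq_left (by linarith : (0:ℝ) ≤ τy), min_eq_right (le_of_lt h)]
        rw [hcl] at Hfy
        have h1 : eyb = fy := by
          have he : eyb ^ 2 = fy ^ 2 := by rw [Hdyb, Hfy]
          nlinarith only [he, heyb0, hfy0]
        have h2 : eyb ≤ eya := by
          apply le_of_sq_le_sq' heya0
          nlinarith only [Hdya, Hdyb, h, hL]
        rw [min_eq_right h2, h1]
    have hPpy' : Ppy ≤ lam * Ry := by rw [hRydef]; rwa [heyf] at hPpy
    by_cases hinx : 0 ≤ τx ∧ τx ≤ L
    · -- Case II.b : x projects inside the segment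
      set μ := min τx (L - τx) with hμdef
      have hμ0 : 0 ≤ μ := le_min hinx.1 (by linarith [hinx.2])
      have hexμ : min exa exb ≤ gx + μ := by
        rcases le_total τx (L - τx) with h | h
        · have hμτ : μ = min τx (L - τx) := hμdef
          have hxa : exa ≤ gx + τx := by
            apply le_of_sq_le_sq' (by linarith [hinx.1] : (0:ℝ) ≤ gx + τx)
            nlinarith only [Hdxa, hgx0, hinx.1]
          calc min exa exb ≤ exa := min_le_left _ _
            _ ≤ gx + min τx (L - τx) := by rw [min_eq_left h]; exact hxa
        · have hxb : exb ≤ gx + (L - τx) := by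
            apply le_of_sq_le_sq' (by linarith [hinx.2] : (0:ℝ) ≤ gx + (L - τx))
            nlinarith only [Hdxb, hgx0, hinx.2]
          calc min exa exb ≤ exb := min_le_right _ _
            _ ≤ gx + min τx (L - τx) := by rw [min_eq_right h]; exact hxb
      have hBx : max rx (min exa exb) ≤ Mx + μ := by
        apply max_le
        · linarith
        · calc min exa exb ≤ gx + μ := hexμ
            _ ≤ fx + μ := by linarith
            _ ≤ Mx + μ := by linarith
      have hPpx'' : Ppx ≤ lam * (Mx + μ) :=
        le_trans hPpx (mul_le_mul_of_nonneg_left hBx (le_of_lt hlam0))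
      -- bound on the axial overshoot of y
      have hOy : |τy - min (max τy 0) L| ≤ s + lam * Mx := by
        rcases hout with h | h
        · have hcl : min (max τy 0) L = 0 := by
            rw [max_eq_right (le_of_lt h), min_eq_left (le_of_lt hL)]
          rw [hcl, sub_zero, abs_of_neg h]
          have h1 : τx - τy ≤ |τy - τx| := by
            rw [abs_sub_comm]; exact le_abs_self _
          have h2 : μ ≤ τx := min_le_left _ _
          nlinarith only [hV3, hPpx'', h1, h2, hμ0, hlam1, hinx.1]
        · have hcl : min (max τy 0) L = L := by
            rw [max_eq_left (by linarith : (0:ℝ) ≤ τy), min_eq_right (le_of_lt h)]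
          rw [hcl, abs_of_pos (by linarith : 0 < τy - L)]
          have h1 : τy - τx ≤ |τy - τx| := le_abs_self _
          have h2 : μ ≤ L - τx := min_le_right _ _
          nlinarith only [hV3, hPpx'', h1, h2, hμ0, hlam1]
      have hgy2 : gy ≤ (1 + lam) * Mx + α := by
        have h2 : gx ≤ Mx := le_trans hgxfx hfxMx
        linarith [hchain, hγ]
      have hcs : (1 + lam) * α + lam * s ≤ κ * Ppy := by
        apply le_of_sq_le_sq' (by positivity)
        have hh : ((1 + lam) * α + lam * s) ^ 2
            ≤ ((1 + lam) ^ 2 + lam ^ 2) * (α ^ 2 + s ^ 2) := by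
          nlinarith only [sq_nonneg ((1 + lam) * s - lam * α)]
        calc ((1 + lam) * α + lam * s) ^ 2
            ≤ ((1 + lam) ^ 2 + lam ^ 2) * (α ^ 2 + s ^ 2) := hh
          _ = (κ * Ppy) ^ 2 := by rw [mul_pow, hκsq, hV2]
      have hOsq : (τy - min (max τy 0) L) ^ 2 ≤ (s + lam * Mx) ^ 2 := by
        have h0 : (0:ℝ) ≤ s + lam * Mx := by positivity
        calc (τy - min (max τy 0) L) ^ 2 = |τy - min (max τy 0) L| ^ 2 := (sq_abs _).symm
          _ ≤ (s + lam * Mx) ^ 2 := by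
              apply pow_le_pow_left₀ (abs_nonneg _) hOy
      have hgysq : gy ^ 2 ≤ ((1 + lam) * Mx + α) ^ 2 :=
        pow_le_pow_left₀ hgy0 hgy2 2
      have hMcs : Mx * ((1 + lam) * α + lam * s) ≤ Mx * (κ * Ppy) :=
        mul_le_mul_of_nonneg_left hcs hMx0
      have hfy2 : fy ^ 2 ≤ ((1 + lam) * Mx + α) ^ 2 + (s + lam * Mx) ^ 2 := by
        rw [Hfy]; exact add_le_add hgysq hOsq
      have hexp : ((1 + lam) * Mx + α) ^ 2 + (s + lam * Mx) ^ 2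
          = κ ^ 2 * Mx ^ 2 + 2 * Mx * ((1 + lam) * α + lam * s) + (α ^ 2 + s ^ 2) := by
        rw [hκsq]; ring
      have hkey : fy ^ 2 ≤ (κ * Mx + Ppy) ^ 2 := by
        have hfin : κ ^ 2 * Mx ^ 2 + 2 * Mx * (κ * Ppy) + Ppy ^ 2 = (κ * Mx + Ppy) ^ 2 := by
          ring
        linarith [hfy2, hexp, hMcs, hV2, hfin]
      have hfin : fy ≤ κ * Mx + Ppy :=
        le_of_sq_le_sq' (by positivity) hkey
      linarith [hPpy']
    · -- Case II.a : x also projects outside the segment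
      have houtx : τx < 0 ∨ L < τx := by
        rcases lt_or_ge τx 0 with h | h
        · exact Or.inl h
        · rcases le_or_gt τx L with h' | h'
          · exact absurd ⟨h, h'⟩ hinx
          · exact Or.inr h'
      have hexf : min exa exb = fx := by
        rcases houtx with h | h
        · have hcl : min (max τx 0) L = 0 := by
            rw [max_eq_right (le_of_lt h), min_eq_left (le_of_lt hL)]
          rw [hcl] at Hfx
          have h1 : exa = fx := by
            have he : exa ^ 2 = fx ^ 2 := by rw [Hdxa, Hfx]; ring
            nlinarith only [he, hexa0, hfx0]
          have h2 : exa ≤ exb := by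
            apply le_of_sq_le_sq' hexb0
            nlinarith only [Hdxa, Hdxb, h, hL]
          rw [min_eq_left h2, h1]
        · have hcl : min (max τx 0) L = L := by
            rw [max_eq_left (by linarith : (0:ℝ) ≤ τx), min_eq_right (le_of_lt h)]
          rw [hcl] at Hfx
          have h1 : exb = fx := by
            have he : exb ^ 2 = fx ^ 2 := by rw [Hdxb, Hfx]
            nlinarith only [he, hexb0, hfx0]
          have h2 : exb ≤ exa := by
            apply le_of_sq_le_sq' hexa0
            nlinarith only [Hdxa, Hdxb, h, hL]
          rw [min_eq_right h2, h1]
      have hPpx' : Ppx ≤ lam * Mx := by rw [hMxdef]; rwa [hexf] at hPpx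
      have h9 : fy ≤ (1 + lam) * Mx + lam * Ry := by
        nlinarith only [hV4, hPpy', hPpx', hfxMx]
      nlinarith only [h9, mul_le_mul_of_nonneg_right hκge hMx0]

lemma orth_chain2 (v x y p z : E) :
    (z - x) - ⟪z - x, v⟫_ℝ • v =
      ((z - y) - ⟪z - y, v⟫_ℝ • v) - ((p - y) - ⟪p - y, v⟫_ℝ • v)
        + ((p - x) - ⟪p - x, v⟫_ℝ • v) := by
  have h : z - x = ((z - y) - (p - y)) + (p - x) := by abel
  rw [h, inner_add_left, inner_sub_left, add_smul, sub_smul]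
  abel

/-- The geometric single-segment estimate. -/
lemma core_seg {a b v x y p : E} {L lam rx ry : ℝ}
    (hv : ‖v‖ = 1) (hdir : b - a = L • v) (hL : 0 < L)
    (hlam0 : 0 < lam) (hlam1 : lam < 1)
    (hpx1 : ‖p - x‖ ≤ lam * max rx (min (dist x a) (dist x b)))
    (hpx2 : ‖(p - x) - ⟪p - x, v⟫_ℝ • v‖ ≤ lam * max rx (Metric.infDist x (segment ℝ a b)))
    (hpy1 : ‖p - y‖ ≤ lam * max ry (min (dist y a) (dist y b)))
    (hpy2 : ‖(p - y) - ⟪p - y, v⟫_ℝ • v‖ ≤ lam * max ry (Metric.infDist y (segment ℝ a b))) :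
    Metric.infDist y (segment ℝ a b)
      ≤ Real.sqrt ((1 + lam) ^ 2 + lam ^ 2) * max rx (Metric.infDist x (segment ℝ a b))
        + lam * max ry (Metric.infDist y (segment ℝ a b)) := by
  have hκ0 : 0 ≤ Real.sqrt ((1 + lam) ^ 2 + lam ^ 2) := Real.sqrt_nonneg _
  have hκsq : Real.sqrt ((1 + lam) ^ 2 + lam ^ 2) ^ 2 = (1 + lam) ^ 2 + lam ^ 2 :=
    Real.sq_sqrt (by positivity)
  have hchain : ‖(y - a) - ⟪y - a, v⟫_ℝ • v‖
      ≤ ‖(x - a) - ⟪x - a, v⟫_ℝ • v‖ + ‖(p - y) - ⟪p - y, v⟫_ℝ • v‖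
        + ‖(p - x) - ⟪p - x, v⟫_ℝ • v‖ := by
    rw [orth_chain v a x y p]
    calc ‖((x - a) - ⟪x - a, v⟫_ℝ • v) - ((p - y) - ⟪p - y, v⟫_ℝ • v)
          + ((p - x) - ⟪p - x, v⟫_ℝ • v)‖
        ≤ ‖((x - a) - ⟪x - a, v⟫_ℝ • v) - ((p - y) - ⟪p - y, v⟫_ℝ • v)‖
          + ‖(p - x) - ⟪p - x, v⟫_ℝ • v‖ := norm_add_le _ _
      _ ≤ ‖(x - a) - ⟪x - a, v⟫_ℝ • v‖ + ‖(p - y) - ⟪p - y, v⟫_ℝ • v‖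
          + ‖(p - x) - ⟪p - x, v⟫_ℝ • v‖ := by
            linarith [norm_sub_le ((x - a) - ⟪x - a, v⟫_ℝ • v) ((p - y) - ⟪p - y, v⟫_ℝ • v)]
  have hV2 : ‖(p - y) - ⟪p - y, v⟫_ℝ • v‖ ^ 2 + |⟪p - y, v⟫_ℝ| ^ 2 = ‖p - y‖ ^ 2 := by
    have := norm_sq_orth v (p - y) hv
    rw [sq_abs]
    linarith
  have hV3 : |⟪y - a, v⟫_ℝ - ⟪x - a, v⟫_ℝ| ≤ |⟪p - y, v⟫_ℝ| + ‖p - x‖ := by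
    have e1 : ⟪y - a, v⟫_ℝ - ⟪x - a, v⟫_ℝ = ⟪p - x, v⟫_ℝ - ⟪p - y, v⟫_ℝ := by
      rw [← inner_sub_left, ← inner_sub_left]
      congr 1
      abel
    rw [e1]
    calc |⟪p - x, v⟫_ℝ - ⟪p - y, v⟫_ℝ| ≤ |⟪p - x, v⟫_ℝ| + |⟪p - y, v⟫_ℝ| := abs_sub _ _
      _ ≤ |⟪p - y, v⟫_ℝ| + ‖p - x‖ := by linarith [abs_inner_le v (p - x) hv]
  have hV4 : Metric.infDist y (segment ℝ a b)
      ≤ Metric.infDist x (segment ℝ a b) + ‖p - y‖ + ‖p - x‖ := by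
    have h1 : Metric.infDist y (segment ℝ a b)
        ≤ Metric.infDist p (segment ℝ a b) + dist y p := Metric.infDist_le_infDist_add_dist
    have h2 : Metric.infDist p (segment ℝ a b)
        ≤ Metric.infDist x (segment ℝ a b) + dist p x := Metric.infDist_le_infDist_add_dist
    have h3 : dist y p = ‖p - y‖ := by rw [dist_comm, dist_eq_norm]
    have h4 : dist p x = ‖p - x‖ := dist_eq_norm _ _
    linarith
  exact core_arith hL hlam0 hlam1 hκ0 hκsq
    Metric.infDist_nonneg Metric.infDist_nonneg (norm_nonneg _) (norm_nonneg _)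
    (norm_nonneg _) (abs_nonneg _) (norm_nonneg _) (norm_nonneg _)
    dist_nonneg dist_nonneg dist_nonneg dist_nonneg
    (infDist_seg_sq hv hdir hL x) (infDist_seg_sq hv hdir hL y)
    (dist_a_sq a hv x) (dist_b_sq hv hdir x) (dist_a_sq a hv y) (dist_b_sq hv hdir y)
    hchain hV2 hV3 hV4 hpx2 hpx1 hpy2 hpy1

/-- Characterization of `capsuleSeg` as cylinder ∩ ball. -/
lemma capsuleSeg_eq (a b v x : E) (hv : ‖v‖ = 1) (r : ℝ) :
    capsuleSeg a b v x r =
      {z | ‖(z - x) - ⟪z - x, v⟫_ℝ • v‖ ≤ max r (Metric.infDist x (segment ℝ a b))} ∩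
        Metric.closedBall x (max r (min (dist x a) (dist x b))) := by
  unfold capsuleSeg
  split_ifs with h
  · ext z
    simp only [Set.mem_inter_iff, Metric.mem_closedBall, Set.mem_setOf_eq]
    rw [← h]
    constructor
    · intro hz
      refine ⟨?_, hz⟩
      calc ‖(z - x) - ⟪z - x, v⟫_ℝ • v‖ ≤ ‖z - x‖ := norm_orth_le v (z - x) hv
        _ = dist z x := (dist_eq_norm _ _).symm
        _ ≤ max r (Metric.infDist x (segment ℝ a b)) := hz
    · rintro ⟨_, hz⟩
      exact hz
  · rfl

/-- Membership in the scaled capsule, componentwise. -/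
lemma mem_scale_iff {n : ℕ} (a b v : Fin n → E) (hv : ∀ i, ‖v i‖ = 1)
    (x q : E) (r mu : ℝ) (hmu : 0 < mu) :
    q ∈ scaleAbout x mu (capsuleFam a b v x r) ↔
      ∀ i, ‖(q - x) - ⟪q - x, v i⟫_ℝ • v i‖
            ≤ mu * max r (Metric.infDist x (segment ℝ (a i) (b i)))
        ∧ ‖q - x‖ ≤ mu * max r (min (dist x (a i)) (dist x (b i))) := by
  constructor
  · rintro ⟨w, hw, hmap⟩
    have hqx : q - x = mu • (w - x) := by
      rw [AffineMap.homothety_apply] at hmap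
      rw [← hmap]
      simp only [vsub_eq_sub, vadd_eq_add]
      abel
    intro i
    have hw' := Set.mem_iInter.mp hw i
    rw [capsuleSeg_eq (a i) (b i) (v i) x (hv i) r] at hw'
    obtain ⟨h1, h2⟩ := hw'
    rw [Metric.mem_closedBall, dist_eq_norm] at h2
    constructor
    · rw [hqx, orth_smul, norm_smul, Real.norm_eq_abs, abs_of_pos hmu]
      exact mul_le_mul_of_nonneg_left h1 hmu.le
    · rw [hqx, norm_smul, Real.norm_eq_abs, abs_of_pos hmu]
      exact mul_le_mul_of_nonneg_left h2 hmu.le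
  · intro hq
    refine ⟨x + mu⁻¹ • (q - x), ?_, ?_⟩
    · apply Set.mem_iInter.mpr
      intro i
      rw [capsuleSeg_eq (a i) (b i) (v i) x (hv i) r]
      have hwx : (x + mu⁻¹ • (q - x)) - x = mu⁻¹ • (q - x) := add_sub_cancel_left x _
      constructor
      · show ‖((x + mu⁻¹ • (q - x)) - x) - ⟪(x + mu⁻¹ • (q - x)) - x, v i⟫_ℝ • v i‖ ≤ _
        rw [hwx, orth_smul, norm_smul, Real.norm_eq_abs, abs_of_pos (inv_pos.mpr hmu)]
        calc mu⁻¹ * ‖(q - x) - ⟪q - x, v i⟫_ℝ • v i‖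
            ≤ mu⁻¹ * (mu * max r (Metric.infDist x (segment ℝ (a i) (b i)))) :=
              mul_le_mul_of_nonneg_left (hq i).1 (inv_pos.mpr hmu).le
          _ = max r (Metric.infDist x (segment ℝ (a i) (b i))) := by
              field_simp
      · rw [Metric.mem_closedBall, dist_eq_norm, hwx, norm_smul, Real.norm_eq_abs,
          abs_of_pos (inv_pos.mpr hmu)]
        calc mu⁻¹ * ‖q - x‖ ≤ mu⁻¹ * (mu * max r (min (dist x (a i)) (dist x (b i)))) :=
              mul_le_mul_of_nonneg_left (hq i).2 (inv_pos.mpr hmu).le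
          _ = max r (min (dist x (a i)) (dist x (b i))) := by field_simp
    · rw [AffineMap.homothety_apply]
      simp only [vsub_eq_sub, vadd_eq_add]
      rw [add_sub_cancel_left, smul_inv_smul₀ (ne_of_gt hmu)]
      abel

lemma lfs_le {n : ℕ} (a b : Fin n → E) (x : E) {i j : Fin n} (hij : i < j) :
    lfs a b x ≤ max (Metric.infDist x (segment ℝ (a i) (b i)))
      (Metric.infDist x (segment ℝ (a j) (b j))) := by
  apply csInf_le
  · refine ⟨0, fun t ht => ?_⟩
    obtain ⟨i', j', _, rfl⟩ := ht
    exact le_trans Metric.infDist_nonneg (le_max_left _ _)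
  · exact ⟨i, j, hij, rfl⟩

lemma lfs_exists {n : ℕ} (hn : 2 ≤ n) (a b : Fin n → E) (x : E) :
    ∃ i j : Fin n, i < j ∧ lfs a b x = max (Metric.infDist x (segment ℝ (a i) (b i)))
      (Metric.infDist x (segment ℝ (a j) (b j))) := by
  have hne : {t | ∃ i j : Fin n, i < j ∧
      t = max (Metric.infDist x (segment ℝ (a i) (b i)))
        (Metric.infDist x (segment ℝ (a j) (b j)))}.Nonempty := by
    refine ⟨_, ⟨⟨0, by omega⟩, ⟨1, by omega⟩, ?_, rfl⟩⟩
    exact Fin.mk_lt_mk.mpr (by norm_num)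
  have hfin : {t | ∃ i j : Fin n, i < j ∧
      t = max (Metric.infDist x (segment ℝ (a i) (b i)))
        (Metric.infDist x (segment ℝ (a j) (b j)))}.Finite := by
    apply Set.Finite.subset (Set.finite_range
      (fun pr : Fin n × Fin n => max (Metric.infDist x (segment ℝ (a pr.1) (b pr.1)))
        (Metric.infDist x (segment ℝ (a pr.2) (b pr.2)))))
    rintro t ⟨i, j, _, rfl⟩
    exact ⟨(i, j), rfl⟩
  exact hne.csInf_mem hfin

end Cap

/-- **Expansion-Containment with local feature size.** If
`C^λ(x, φ(x))` and `C^λ(y, φ(y))` overlap, then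
`C^λ(y, φ(y)) ⊆ C^{βλ}(x, φ(x))` with `β = (3+λ)(1+λ)/(1−λ)²`. -/
theorem capsule_expansion_containment_lfs {d n : ℕ} (hd : 1 ≤ d) (hn : 2 ≤ n)
    (a b v : Fin n → EuclideanSpace ℝ (Fin d))
    (hab : ∀ i, a i ≠ b i)
    (hv : ∀ i, ‖v i‖ = 1)
    (hdir : ∀ i, b i - a i = ‖b i - a i‖ • v i)
    (hdisj : ∀ i j, i ≠ j → Disjoint (segment ℝ (a i) (b i)) (segment ℝ (a j) (b j)))
    (lam : ℝ) (hlam0 : 0 < lam) (hlam1 : lam < 1)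
    (x y : EuclideanSpace ℝ (Fin d))
    (hmeet : (scaleAbout x lam (capsuleFam a b v x (lfs a b x)) ∩
        scaleAbout y lam (capsuleFam a b v y (lfs a b y))).Nonempty) :
    scaleAbout y lam (capsuleFam a b v y (lfs a b y)) ⊆
      scaleAbout x ((3 + lam) * (1 + lam) / (1 - lam) ^ 2 * lam)
        (capsuleFam a b v x (lfs a b x)) := by
  obtain ⟨p, hpx, hpy⟩ := hmeet
  have h1m : 0 < 1 - lam := by linarith
  have hβl : 0 < (3 + lam) * (1 + lam) / (1 - lam) ^ 2 * lam := by positivity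
  have hL : ∀ i, 0 < ‖b i - a i‖ := by
    intro i
    rw [norm_pos_iff, sub_ne_zero]
    exact fun h => hab i h.symm
  rw [Cap.mem_scale_iff a b v hv x p (lfs a b x) lam hlam0] at hpx
  rw [Cap.mem_scale_iff a b v hv y p (lfs a b y) lam hlam0] at hpy
  intro z hz
  rw [Cap.mem_scale_iff a b v hv y z (lfs a b y) lam hlam0] at hz
  rw [Cap.mem_scale_iff a b v hv x z (lfs a b x) _ hβl]
  set κ := Real.sqrt ((1 + lam) ^ 2 + lam ^ 2) with hκdef
  have hκ0 : 0 ≤ κ := Real.sqrt_nonneg _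
  have hκsq : κ ^ 2 = (1 + lam) ^ 2 + lam ^ 2 := Real.sq_sqrt (by positivity)
  have hκb : κ * (1 - lam) ≤ 1 + 3 * lam := by
    apply Cap.le_of_sq_le_sq' (by positivity)
    rw [mul_pow, hκsq]
    nlinarith [hlam0.le, sq_nonneg lam,
      mul_nonneg (mul_nonneg (mul_nonneg hlam0.le hlam0.le) hlam0.le)
        (sub_nonneg.mpr hlam1.le)]
  have hcore : ∀ i, Metric.infDist y (segment ℝ (a i) (b i))
      ≤ κ * max (lfs a b x) (Metric.infDist x (segment ℝ (a i) (b i)))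
        + lam * max (lfs a b y) (Metric.infDist y (segment ℝ (a i) (b i))) := by
    intro i
    exact Cap.core_seg (hv i) (hdir i) (hL i) hlam0 hlam1
      (hpx i).2 (hpx i).1 (hpy i).2 (hpy i).1
  -- the pair of segments realizing the local feature size at x
  obtain ⟨i1, j1, hij1, hphix⟩ := Cap.lfs_exists hn a b x
  have hfi1 : Metric.infDist x (segment ℝ (a i1) (b i1)) ≤ lfs a b x := by
    rw [hphix]; exact le_max_left _ _
  have hfj1 : Metric.infDist x (segment ℝ (a j1) (b j1)) ≤ lfs a b x := by
    rw [hphix]; exact le_max_right _ _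
  have hryM : lfs a b y ≤ max (Metric.infDist y (segment ℝ (a i1) (b i1)))
      (Metric.infDist y (segment ℝ (a j1) (b j1))) := Cap.lfs_le a b y hij1
  -- bound on the local feature size at y
  have hphiy : (1 - lam) * lfs a b y ≤ κ * lfs a b x := by
    have hM : max (Metric.infDist y (segment ℝ (a i1) (b i1)))
        (Metric.infDist y (segment ℝ (a j1) (b j1)))
        ≤ κ * lfs a b x + lam * max (Metric.infDist y (segment ℝ (a i1) (b i1)))
          (Metric.infDist y (segment ℝ (a j1) (b j1))) := by
      rcases le_total (Metric.infDist y (segment ℝ (a i1) (b i1)))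
          (Metric.infDist y (segment ℝ (a j1) (b j1))) with h | h
      · rw [max_eq_right h]
        have hc := hcore j1
        rw [max_eq_left hfj1] at hc
        have h2 : max (lfs a b y) (Metric.infDist y (segment ℝ (a j1) (b j1)))
            ≤ Metric.infDist y (segment ℝ (a j1) (b j1)) := by
          apply max_le _ le_rfl
          calc lfs a b y ≤ _ := hryM
            _ = _ := max_eq_right h
        nlinarith [hc, h2, hlam0]
      · rw [max_eq_left h]
        have hc := hcore i1
        rw [max_eq_left hfi1] at hc
        have h2 : max (lfs a b y) (Metric.infDist y (segment ℝ (a i1) (b i1)))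
            ≤ Metric.infDist y (segment ℝ (a i1) (b i1)) := by
          apply max_le _ le_rfl
          calc lfs a b y ≤ _ := hryM
            _ = _ := max_eq_left h
        nlinarith [hc, h2, hlam0]
    nlinarith [hM, hryM, h1m]
  -- per-segment bound on the y-cylinder radius
  have hrho : ∀ i, (1 - lam) * max (lfs a b y) (Metric.infDist y (segment ℝ (a i) (b i)))
      ≤ κ * max (lfs a b x) (Metric.infDist x (segment ℝ (a i) (b i))) := by
    intro i
    rcases max_cases (lfs a b y) (Metric.infDist y (segment ℝ (a i) (b i))) with
      ⟨he, _⟩ | ⟨he, _⟩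
    · rw [he]
      calc (1 - lam) * lfs a b y ≤ κ * lfs a b x := hphiy
        _ ≤ κ * max (lfs a b x) (Metric.infDist x (segment ℝ (a i) (b i))) :=
            mul_le_mul_of_nonneg_left (le_max_left _ _) hκ0
    · rw [he]
      have hc := hcore i
      rw [he] at hc
      linarith [hc]
  -- per-segment bound on the y-ball radius
  have hPy : ∀ i, (1 - lam) * max (lfs a b y) (min (dist y (a i)) (dist y (b i)))
      ≤ (1 + lam) * max (lfs a b x) (min (dist x (a i)) (dist x (b i))) := by
    intro i
    have hd : dist y x ≤ lam * max (lfs a b y) (min (dist y (a i)) (dist y (b i)))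
        + lam * max (lfs a b x) (min (dist x (a i)) (dist x (b i))) := by
      calc dist y x ≤ dist y p + dist p x := dist_triangle _ _ _
        _ = ‖p - y‖ + ‖p - x‖ := by rw [dist_comm y p, dist_eq_norm, dist_eq_norm]
        _ ≤ _ := add_le_add (hpy i).2 (hpx i).2
    have hlipr : lfs a b y ≤ lfs a b x + dist y x := by
      have h1 : Metric.infDist y (segment ℝ (a i1) (b i1))
          ≤ Metric.infDist x (segment ℝ (a i1) (b i1)) + dist y x :=
        Metric.infDist_le_infDist_add_dist
      have h2 : Metric.infDist y (segment ℝ (a j1) (b j1))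
          ≤ Metric.infDist x (segment ℝ (a j1) (b j1)) + dist y x :=
        Metric.infDist_le_infDist_add_dist
      calc lfs a b y ≤ _ := hryM
        _ ≤ lfs a b x + dist y x := by
          apply max_le
          · linarith [hfi1]
          · linarith [hfj1]
    have hlipe : min (dist y (a i)) (dist y (b i))
        ≤ min (dist x (a i)) (dist x (b i)) + dist y x := by
      rcases le_total (dist x (a i)) (dist x (b i)) with h | h
      · rw [min_eq_left h]
        calc min (dist y (a i)) (dist y (b i)) ≤ dist y (a i) := min_le_left _ _
          _ ≤ dist y x + dist x (a i) := dist_triangle _ _ _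
          _ = dist x (a i) + dist y x := by ring
      · rw [min_eq_right h]
        calc min (dist y (a i)) (dist y (b i)) ≤ dist y (b i) := min_le_right _ _
          _ ≤ dist y x + dist x (b i) := dist_triangle _ _ _
          _ = dist x (b i) + dist y x := by ring
    have hPyB : max (lfs a b y) (min (dist y (a i)) (dist y (b i)))
        ≤ max (lfs a b x) (min (dist x (a i)) (dist x (b i))) + dist y x := by
      apply max_le
      · calc lfs a b y ≤ lfs a b x + dist y x := hlipr
          _ ≤ _ := by gcongr; exact le_max_left _ _
      · calc min (dist y (a i)) (dist y (b i))
            ≤ min (dist x (a i)) (dist x (b i)) + dist y x := hlipe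
          _ ≤ _ := by gcongr; exact le_max_right _ _
    linarith [hd, hPyB]
  -- final componentwise containment
  intro i
  obtain ⟨hz1, hz2⟩ := hz i
  obtain ⟨hpy1, hpy2⟩ := hpy i
  obtain ⟨hpx1, hpx2⟩ := hpx i
  have hA0 : 0 ≤ max (lfs a b x) (Metric.infDist x (segment ℝ (a i) (b i))) :=
    le_trans Metric.infDist_nonneg (le_max_right _ _)
  have hB0 : 0 ≤ max (lfs a b x) (min (dist x (a i)) (dist x (b i))) :=
    le_trans (le_min dist_nonneg dist_nonneg) (le_max_right _ _)
  constructor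
  · -- cylinder component
    have hD : ‖(z - x) - ⟪z - x, v i⟫_ℝ • v i‖
        ≤ lam * max (lfs a b x) (Metric.infDist x (segment ℝ (a i) (b i)))
          + 2 * (lam * max (lfs a b y) (Metric.infDist y (segment ℝ (a i) (b i)))) := by
      rw [Cap.orth_chain2 (v i) x y p z]
      have t1 := norm_add_le
        (((z - y) - ⟪z - y, v i⟫_ℝ • v i) - ((p - y) - ⟪p - y, v i⟫_ℝ • v i))
        ((p - x) - ⟪p - x, v i⟫_ℝ • v i)
      have t2 := norm_sub_le ((z - y) - ⟪z - y, v i⟫_ℝ • v i)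
        ((p - y) - ⟪p - y, v i⟫_ℝ • v i)
      linarith [hz1, hpy1, hpx1]
    have htar : (3 + lam) * (1 + lam) / (1 - lam) ^ 2 * lam
          * max (lfs a b x) (Metric.infDist x (segment ℝ (a i) (b i)))
        = (3 + lam) * (1 + lam) * lam
            * max (lfs a b x) (Metric.infDist x (segment ℝ (a i) (b i))) / (1 - lam) ^ 2 := by
      ring
    rw [htar, le_div_iff₀ (by positivity)]
    have t1 : ‖(z - x) - ⟪z - x, v i⟫_ℝ • v i‖ * (1 - lam) ^ 2
        ≤ (lam * max (lfs a b x) (Metric.infDist x (segment ℝ (a i) (b i)))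
          + 2 * (lam * max (lfs a b y) (Metric.infDist y (segment ℝ (a i) (b i)))))
            * (1 - lam) ^ 2 :=
      mul_le_mul_of_nonneg_right hD (by positivity)
    have t2 : (2 * lam * (1 - lam))
          * ((1 - lam) * max (lfs a b y) (Metric.infDist y (segment ℝ (a i) (b i))))
        ≤ (2 * lam * (1 - lam))
          * (κ * max (lfs a b x) (Metric.infDist x (segment ℝ (a i) (b i)))) :=
      mul_le_mul_of_nonneg_left (hrho i) (by positivity)
    have t3 : (2 * lam * max (lfs a b x) (Metric.infDist x (segment ℝ (a i) (b i))))
          * (κ * (1 - lam))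
        ≤ (2 * lam * max (lfs a b x) (Metric.infDist x (segment ℝ (a i) (b i))))
          * (1 + 3 * lam) := by
      apply mul_le_mul_of_nonneg_left hκb
      positivity
    linarith only [t1, t2, t3]
  · -- ball component
    have hD : ‖z - x‖
        ≤ lam * max (lfs a b x) (min (dist x (a i)) (dist x (b i)))
          + 2 * (lam * max (lfs a b y) (min (dist y (a i)) (dist y (b i)))) := by
      have hzx : z - x = ((z - y) - (p - y)) + (p - x) := by abel
      have t1 := norm_add_le ((z - y) - (p - y)) (p - x)
      have t2 := norm_sub_le (z - y) (p - y)
      rw [hzx]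
      linarith [hz2, hpy2, hpx2]
    have htar : (3 + lam) * (1 + lam) / (1 - lam) ^ 2 * lam
          * max (lfs a b x) (min (dist x (a i)) (dist x (b i)))
        = (3 + lam) * (1 + lam) * lam
            * max (lfs a b x) (min (dist x (a i)) (dist x (b i))) / (1 - lam) ^ 2 := by
      ring
    rw [htar, le_div_iff₀ (by positivity)]
    have t1 : ‖z - x‖ * (1 - lam) ^ 2
        ≤ (lam * max (lfs a b x) (min (dist x (a i)) (dist x (b i)))
          + 2 * (lam * max (lfs a b y) (min (dist y (a i)) (dist y (b i)))))
            * (1 - lam) ^ 2 :=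
      mul_le_mul_of_nonneg_right hD (by positivity)
    have t2 : (2 * lam * (1 - lam))
          * ((1 - lam) * max (lfs a b y) (min (dist y (a i)) (dist y (b i))))
        ≤ (2 * lam * (1 - lam))
          * ((1 + lam) * max (lfs a b x) (min (dist x (a i)) (dist x (b i)))) :=
      mul_le_mul_of_nonneg_left (hPy i) (by positivity)
    have m1 : 0 ≤ lam ^ 2 * max (lfs a b x) (min (dist x (a i)) (dist x (b i))) :=
      mul_nonneg (sq_nonneg _) hB0
    have m2 : 0 ≤ lam ^ 3 * max (lfs a b x) (min (dist x (a i)) (dist x (b i))) :=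
      mul_nonneg (pow_nonneg hlam0.le 3) hB0
    linarith only [t1, t2, m1, m2]
end
end
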